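/- Under the i.i.d. equivariant selection setup, let W₁ ⊆ W₂ ⊆ {1, …, n} be subsets and j ∈ W₁ an index, with |W₁| = ℓ ≥ 1. Then E[X_j^{W₁} · X_j^{W₂}] ≤ (1/ℓ) · E[(Q_{W₁})²]. -/

import Mathlib

open MeasureTheory
open scoped Classical

/-- A selection function `f : Sⁿ → {1,…,n} ∪ {⊥}` is permutation-equivariant if
`f(s ∘ σ) = σ⁻¹(f(s))` (with `⊥ ↦ ⊥`). -/
def PermEquivariant {S : Type*} {n : ℕ} (f : (Fin n → S) → Option (Fin n)) : Prop :=
  ∀ (σ : Equiv.Perm (Fin n)) (s : Fin n → S),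
    f (fun i => s (σ i)) = Option.map σ.symm (f s)

/-- The σ-algebra generated by the coordinates in the window `W`. -/
def windowSigma {S : Type*} [MeasurableSpace S] (n : ℕ) (W : Finset (Fin n)) :
    MeasurableSpace (Fin n → S) :=
  ⨆ i ∈ W, MeasurableSpace.comap (fun s : Fin n → S => s i) inferInstance

/-- `Q_W = P[f(t) ∈ W | t_W]`, the conditional probability that `f` selects an index in `W`
given the coordinates in `W`, under the i.i.d. product measure. -/
noncomputable def Qwin {S : Type*} [MeasurableSpace S] (D : Measure S) (n : ℕ)
    (f : (Fin n → S) → Option (Fin n)) (W : Finset (Fin n)) : (Fin n → S) → ℝ :=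
  (Measure.pi fun _ : Fin n => D)[(fun s => if ∃ j ∈ W, f s = some j then (1 : ℝ) else 0) |
    windowSigma n W]

/-- `X_j^W = P[f(t) = j | t_W]`, the windowed estimator with window `W`. -/
noncomputable def Xwin {S : Type*} [MeasurableSpace S] (D : Measure S) (n : ℕ)
    (f : (Fin n → S) → Option (Fin n)) (j : Fin n) (W : Finset (Fin n)) : (Fin n → S) → ℝ :=
  (Measure.pi fun _ : Fin n => D)[(fun s => if f s = some j then (1 : ℝ) else 0) |
    windowSigma n W]

section Aux
variable {S : Type*} [MeasurableSpace S] {n : ℕ}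

lemma windowSigma_le (W : Finset (Fin n)) :
    windowSigma (S := S) n W ≤ (inferInstance : MeasurableSpace (Fin n → S)) :=
  iSup₂_le fun i _ => (measurable_pi_apply i).comap_le

lemma windowSigma_mono {W₁ W₂ : Finset (Fin n)} (h : W₁ ⊆ W₂) :
    windowSigma (S := S) n W₁ ≤ windowSigma (S := S) n W₂ :=
  iSup₂_le fun i hi => le_iSup₂ (f := fun i (_ : i ∈ W₂) =>
    MeasurableSpace.comap (fun s : Fin n → S => s i) inferInstance) i (h hi)

/-- The coordinate-permuting map as a measurable equiv. -/
def permME (n : ℕ) (S : Type*) [MeasurableSpace S] (σ : Equiv.Perm (Fin n)) :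
    (Fin n → S) ≃ᵐ (Fin n → S) where
  toFun s := fun k => s (σ k)
  invFun s := fun k => s (σ.symm k)
  left_inv s := by funext k; simp
  right_inv s := by funext k; simp
  measurable_toFun := measurable_pi_lambda _ fun k => measurable_pi_apply (σ k)
  measurable_invFun := measurable_pi_lambda _ fun k => measurable_pi_apply (σ.symm k)

@[simp] lemma permME_apply (σ : Equiv.Perm (Fin n)) (s : Fin n → S) (k : Fin n) :
    permME n S σ s k = s (σ k) := rfl

lemma permME_measurePreserving (D : Measure S) [IsProbabilityMeasure D]
    (σ : Equiv.Perm (Fin n)) :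
    MeasurePreserving (permME n S σ) (Measure.pi fun _ : Fin n => D)
      (Measure.pi fun _ : Fin n => D) := by
  refine ⟨(permME n S σ).measurable, ?_⟩
  refine (Measure.pi_eq fun s hs => ?_).symm
  rw [Measure.map_apply (permME n S σ).measurable (MeasurableSet.univ_pi hs)]
  have hpre : (permME n S σ) ⁻¹' Set.pi Set.univ s = Set.pi Set.univ (fun k => s (σ.symm k)) := by
    ext x
    simp only [Set.mem_preimage, Set.mem_pi, Set.mem_univ, forall_true_left]
    constructor
    · intro h k; simpa using h (σ.symm k)
    · intro h i; simpa using h (σ i)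
  rw [hpre, Measure.pi_pi]
  exact Equiv.prod_comp σ.symm (fun i => D (s i))

lemma permME_measurable_window {σ : Equiv.Perm (Fin n)} {W : Finset (Fin n)}
    (hσ : ∀ k ∈ W, σ k ∈ W) :
    @Measurable _ _ (windowSigma (S := S) n W) (windowSigma (S := S) n W) (permME n S σ) := by
  rw [measurable_iff_comap_le]
  unfold windowSigma
  rw [MeasurableSpace.comap_iSup]
  refine iSup_le fun i => ?_
  rw [MeasurableSpace.comap_iSup]
  refine iSup_le fun hi => ?_
  rw [MeasurableSpace.comap_comp]
  have : ((fun s : Fin n → S => s i) ∘ (permME n S σ)) = fun s : Fin n → S => s (σ i) := rfl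
  rw [this]
  exact le_iSup₂ (f := fun i (_ : i ∈ W) =>
    MeasurableSpace.comap (fun s : Fin n → S => s i) inferInstance) (σ i) (hσ i hi)

end Aux

section Swap
variable {S : Type*} [MeasurableSpace S] {n : ℕ} (D : Measure S) [IsProbabilityMeasure D]
  (f : (Fin n → S) → Option (Fin n))
  (hfmeas : ∀ o : Option (Fin n), MeasurableSet {s : Fin n → S | f s = o})
  (hequiv : PermEquivariant f)

include hfmeas in

lemma ind_integrable (k : Fin n) :
    Integrable (fun s => if f s = some k then (1 : ℝ) else 0)
      (Measure.pi fun _ : Fin n => D) := by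
  refine Integrable.mono' (integrable_const 1)
    ((Measurable.ite (hfmeas (some k)) measurable_const measurable_const).aestronglyMeasurable)
    (Filter.Eventually.of_forall fun s => ?_)
  by_cases h : f s = some k <;> simp [h]

include hfmeas hequiv in
lemma Xwin_swap {W : Finset (Fin n)} {i j : Fin n} (hi : i ∈ W) (hj : j ∈ W) :
    Xwin D n f i W =ᵐ[Measure.pi fun _ : Fin n => D]
      fun s => Xwin D n f j W (permME n S (Equiv.swap i j) s) := by
  classical
  set μ : Measure (Fin n → S) := Measure.pi fun _ : Fin n => D with hμdef
  set σ : Equiv.Perm (Fin n) := Equiv.swap i j with hσdef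
  set T : (Fin n → S) ≃ᵐ (Fin n → S) := permME n S σ with hTdef
  have hm : windowSigma (S := S) n W ≤ (inferInstance : MeasurableSpace (Fin n → S)) :=
    windowSigma_le W
  have hσW : ∀ k ∈ W, σ k ∈ W := by
    intro k hk
    rcases eq_or_ne k i with rfl | hki
    · simpa [hσdef] using hj
    rcases eq_or_ne k j with rfl | hkj
    · simpa [hσdef] using hi
    · simpa [hσdef, Equiv.swap_apply_of_ne_of_ne hki hkj] using hk
  have hTmeas : @Measurable _ _ (windowSigma (S := S) n W) (windowSigma (S := S) n W) T :=
    permME_measurable_window hσW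
  have hTT : ∀ s, T (T s) = s := by
    intro s; funext k; simp [hTdef, hσdef, Equiv.swap_apply_self]
  have hindT : ∀ s, (if f (T s) = some i then (1:ℝ) else 0) = if f s = some j then (1:ℝ) else 0 := by
    intro s
    have h1 : f (T s) = Option.map σ.symm (f s) := hequiv σ s
    have h2 : (Option.map σ.symm (f s) = some i) ↔ f s = some j := by
      cases hfs : f s with
      | none => simp
      | some k =>
        simp only [Option.map_some, Option.some_inj, Equiv.symm_apply_eq, hσdef,
          Equiv.swap_apply_left]
    rw [h1, if_congr h2 rfl rfl]
  have hmp : MeasurePreserving T μ μ := permME_measurePreserving D σ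
  have hemb : MeasurableEmbedding T := T.measurableEmbedding
  -- g := X_j ∘ T satisfies the defining properties of μ[ind_i | m]
  refine (ae_eq_condExp_of_forall_setIntegral_eq hm (ind_integrable D f hfmeas i)
    ?_ ?_ ?_).symm
  · intro A _ _
    exact ((hmp.integrable_comp_emb hemb).mpr integrable_condExp).integrableOn
  · intro A hA _
    have hB : MeasurableSet[windowSigma (S := S) n W] (T ⁻¹' A) := hTmeas hA
    have hA' : A = T ⁻¹' (T ⁻¹' A) := by
      ext x; simp [hTT x]
    calc ∫ x in A, Xwin D n f j W (T x) ∂μ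
        = ∫ x in T ⁻¹' (T ⁻¹' A), Xwin D n f j W (T x) ∂μ := by rw [← hA']
      _ = ∫ y in T ⁻¹' A, Xwin D n f j W y ∂μ :=
          hmp.setIntegral_preimage_emb hemb _ _
      _ = ∫ y in T ⁻¹' A, (if f y = some j then (1:ℝ) else 0) ∂μ :=
          setIntegral_condExp hm (ind_integrable D f hfmeas j) hB
      _ = ∫ y in T ⁻¹' A, (if f (T y) = some i then (1:ℝ) else 0) ∂μ := by
          refine setIntegral_congr_ae (hm _ hB) ?_
          exact Filter.Eventually.of_forall fun y _ => (hindT y).symm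
      _ = ∫ x in A, (if f x = some i then (1:ℝ) else 0) ∂μ :=
          hmp.setIntegral_preimage_emb hemb (fun x => if f x = some i then (1:ℝ) else 0) A
  · exact StronglyMeasurable.aestronglyMeasurable (stronglyMeasurable_condExp.comp_measurable hTmeas)

include hfmeas hequiv in
lemma Xwin_sq_integral_eq {W : Finset (Fin n)} {i j : Fin n} (hi : i ∈ W) (hj : j ∈ W) :
    ∫ s, (Xwin D n f i W s) ^ 2 ∂(Measure.pi fun _ : Fin n => D)
      = ∫ s, (Xwin D n f j W s) ^ 2 ∂(Measure.pi fun _ : Fin n => D) := by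
  have h := Xwin_swap D f hfmeas hequiv hi hj
  have h2 : ∀ᵐ s ∂(Measure.pi fun _ : Fin n => D),
      (Xwin D n f i W s) ^ 2 = (Xwin D n f j W (permME n S (Equiv.swap i j) s)) ^ 2 := by
    filter_upwards [h] with s hs; rw [hs]
  rw [integral_congr_ae h2]
  exact (permME_measurePreserving D (Equiv.swap i j)).integral_comp'
    (fun y => (Xwin D n f j W y) ^ 2)
end Swap

/-- Lemma 5.1 (abstracted): for nested windows `W₁ ⊆ W₂` and `j ∈ W₁` with `|W₁| = ℓ ≥ 1`,
`E[X_j^{W₁} · X_j^{W₂}] ≤ (1/ℓ)·E[(Q_{W₁})²]`. -/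
theorem windowed_estimator_same_vertex
    {S : Type*} [MeasurableSpace S] (n : ℕ)
    (D : Measure S) [IsProbabilityMeasure D]
    (f : (Fin n → S) → Option (Fin n))
    (hfmeas : ∀ o : Option (Fin n), MeasurableSet {s : Fin n → S | f s = o})
    (hequiv : PermEquivariant f)
    (W₁ W₂ : Finset (Fin n)) (hsub : W₁ ⊆ W₂) (j : Fin n) (hj : j ∈ W₁)
    (ℓ : ℕ) (hℓ : ℓ = W₁.card) (hℓ1 : 1 ≤ ℓ) :
    ∫ s, Xwin D n f j W₁ s * Xwin D n f j W₂ s ∂(Measure.pi fun _ : Fin n => D)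
      ≤ (1 / ℓ) * ∫ s, (Qwin D n f W₁ s) ^ 2 ∂(Measure.pi fun _ : Fin n => D) := by
  classical
  set μ : Measure (Fin n → S) := Measure.pi fun _ : Fin n => D with hμdef
  have hm₁ : windowSigma (S := S) n W₁ ≤ MeasurableSpace.pi := windowSigma_le W₁
  set ind : Fin n → (Fin n → S) → ℝ := fun k s => if f s = some k then (1:ℝ) else 0 with hinddef
  have hind_int : ∀ k, Integrable (ind k) μ := fun k => ind_integrable D f hfmeas k
  have hind_nonneg : ∀ k s, 0 ≤ ind k s := by
    intro k s; by_cases h : f s = some k <;> simp [hinddef, h]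
  have hind_le : ∀ k s, ind k s ≤ 1 := by
    intro k s; by_cases h : f s = some k <;> simp [hinddef, h]
  -- basic facts about the X's
  have hX_eq : ∀ (k : Fin n) (W : Finset (Fin n)),
      Xwin D n f k W = μ[ind k | windowSigma n W] := fun _ _ => rfl
  have hX_nonneg : ∀ (k : Fin n) (W : Finset (Fin n)), 0 ≤ᵐ[μ] Xwin D n f k W := by
    intro k W
    exact condExp_nonneg (Filter.Eventually.of_forall fun s => hind_nonneg k s)
  have hX_le_one : ∀ (k : Fin n) (W : Finset (Fin n)), Xwin D n f k W ≤ᵐ[μ] fun _ => 1 := by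
    intro k W
    have hmW : windowSigma (S := S) n W ≤ _ := windowSigma_le (S := S) W
    have := condExp_mono (μ := μ) (m := windowSigma n W) (hind_int k)
      (integrable_const (1:ℝ)) (Filter.Eventually.of_forall fun s => hind_le k s)
    rwa [condExp_const hmW (1:ℝ)] at this
  have hX_bound : ∀ (k : Fin n) (W : Finset (Fin n)),
      ∀ᵐ s ∂μ, ‖Xwin D n f k W s‖ ≤ 1 := by
    intro k W
    filter_upwards [hX_nonneg k W, hX_le_one k W] with s h0 h1
    rw [Real.norm_eq_abs, abs_of_nonneg h0]; exact h1
  have hX_int : ∀ (k : Fin n) (W : Finset (Fin n)), Integrable (Xwin D n f k W) μ :=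
    fun k W => integrable_condExp
  have hX_sm : ∀ (k : Fin n) (W : Finset (Fin n)),
      StronglyMeasurable[windowSigma n W] (Xwin D n f k W) :=
    fun k W => stronglyMeasurable_condExp
  have hX_aesm : ∀ (k : Fin n) (W : Finset (Fin n)), AEStronglyMeasurable (Xwin D n f k W) μ :=
    fun k W => (hX_int k W).aestronglyMeasurable
  -- products are integrable
  have hXmul_int : ∀ (g : (Fin n → S) → ℝ), Integrable g μ →
      ∀ (k : Fin n) (W : Finset (Fin n)),
      Integrable (fun s => Xwin D n f k W s * g s) μ := by
    intro g hg k W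
    exact Integrable.bdd_mul (c := 1) hg (hX_aesm k W) (hX_bound k W)
  -- Step 1+2 combined machinery
  have step : ∀ (W : Finset (Fin n)) (hWsub : W₁ ⊆ W),
      ∫ s, Xwin D n f j W₁ s * Xwin D n f j W s ∂μ
        = ∫ s, Xwin D n f j W₁ s * ind j s ∂μ := by
    intro W hWsub
    have hmW : windowSigma (S := S) n W ≤ _ := windowSigma_le (S := S) W
    have hsm : StronglyMeasurable[windowSigma n W] (Xwin D n f j W₁) :=
      (hX_sm j W₁).mono (windowSigma_mono hWsub)
    have hmul := condExp_mul_of_stronglyMeasurable_left (μ := μ) hsm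
      (hXmul_int (ind j) (hind_int j) j W₁) (hind_int j)
    calc ∫ s, Xwin D n f j W₁ s * Xwin D n f j W s ∂μ
        = ∫ s, (μ[(Xwin D n f j W₁) * (ind j) | windowSigma n W]) s ∂μ := by
          refine (integral_congr_ae ?_).symm
          filter_upwards [hmul] with s hs
          rw [hs]; rfl
      _ = ∫ s, (Xwin D n f j W₁ * ind j) s ∂μ := integral_condExp hmW
      _ = ∫ s, Xwin D n f j W₁ s * ind j s ∂μ := rfl
  have h12 : ∫ s, Xwin D n f j W₁ s * Xwin D n f j W₂ s ∂μ
      = ∫ s, (Xwin D n f j W₁ s) ^ 2 ∂μ := by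
    rw [step W₂ hsub, ← step W₁ (subset_refl W₁)]
    refine integral_congr_ae (Filter.Eventually.of_forall fun s => ?_)
    ring
  -- Q is the sum of the X's
  have hQ : Qwin D n f W₁ =ᵐ[μ] fun s => ∑ i ∈ W₁, Xwin D n f i W₁ s := by
    have hfun : (fun s => if ∃ k ∈ W₁, f s = some k then (1:ℝ) else 0)
        = ∑ i ∈ W₁, ind i := by
      funext s
      rw [Finset.sum_apply]
      cases hfs : f s with
      | none => simp [hinddef, hfs]
      | some k =>
        simp only [hinddef, hfs, Option.some_inj]
        by_cases hk : k ∈ W₁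
        · rw [if_pos ⟨k, hk, rfl⟩]
          rw [Finset.sum_ite_eq W₁ k (fun _ => (1:ℝ)), if_pos hk]
        · rw [if_neg (by rintro ⟨i, hi, rfl⟩; exact hk hi)]
          rw [Finset.sum_ite_eq W₁ k (fun _ => (1:ℝ)), if_neg hk]
    have : Qwin D n f W₁ = μ[∑ i ∈ W₁, ind i | windowSigma n W₁] := by
      rw [Qwin, ← hfun]
    rw [this]
    refine (condExp_finsetSum (fun i _ => hind_int i) _).trans ?_
    refine Filter.Eventually.of_forall fun s => ?_
    rw [Finset.sum_apply]
    rfl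
  -- symmetry
  have hsym : ∀ i ∈ W₁, ∫ s, (Xwin D n f i W₁ s) ^ 2 ∂μ
      = ∫ s, (Xwin D n f j W₁ s) ^ 2 ∂μ :=
    fun i hi => Xwin_sq_integral_eq D f hfmeas hequiv hi hj
  -- integrability of squares and of Q²
  have hXsq_int : ∀ i, Integrable (fun s => (Xwin D n f i W₁ s) ^ 2) μ := by
    intro i
    have := hXmul_int (Xwin D n f i W₁) (hX_int i W₁) i W₁
    refine this.congr (Filter.Eventually.of_forall fun s => ?_)
    ring
  have hQsq_int : Integrable (fun s => (Qwin D n f W₁ s) ^ 2) μ := by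
    have hsum_int : Integrable (fun s => ∑ i ∈ W₁, Xwin D n f i W₁ s) μ :=
      integrable_finset_sum _ fun i _ => hX_int i W₁
    have h1 : Integrable (fun s => Qwin D n f W₁ s * Qwin D n f W₁ s) μ := by
      refine Integrable.bdd_mul (c := W₁.card) ?_ ?_ ?_
      · exact integrable_condExp
      · exact integrable_condExp.aestronglyMeasurable
      · filter_upwards [hQ, (ae_all_iff.mpr fun i => hX_bound i W₁)] with s hs hb
        rw [hs, Real.norm_eq_abs]
        calc |∑ i ∈ W₁, Xwin D n f i W₁ s| ≤ ∑ i ∈ W₁, |Xwin D n f i W₁ s| :=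
              Finset.abs_sum_le_sum_abs _ _
          _ ≤ ∑ i ∈ W₁, 1 := Finset.sum_le_sum fun i _ => by
              simpa [Real.norm_eq_abs] using hb i
          _ = W₁.card := by simp
    refine h1.congr (Filter.Eventually.of_forall fun s => ?_)
    ring
  -- the key inequality: ∑ Xᵢ² ≤ Q² a.e.
  have hkey : ∫ s, (∑ i ∈ W₁, (Xwin D n f i W₁ s) ^ 2) ∂μ
      ≤ ∫ s, (Qwin D n f W₁ s) ^ 2 ∂μ := by
    refine integral_mono_ae (integrable_finset_sum _ fun i _ => hXsq_int i) hQsq_int ?_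
    filter_upwards [hQ, ae_all_iff.mpr fun i => hX_nonneg i W₁] with s hs hpos
    rw [hs]
    exact Finset.sum_sq_le_sq_sum_of_nonneg fun i hi => hpos i
  -- assemble
  have hsum : ∫ s, (∑ i ∈ W₁, (Xwin D n f i W₁ s) ^ 2) ∂μ
      = (ℓ : ℝ) * ∫ s, (Xwin D n f j W₁ s) ^ 2 ∂μ := by
    rw [integral_finset_sum _ fun i _ => hXsq_int i]
    rw [Finset.sum_congr rfl (fun i hi => hsym i hi), Finset.sum_const, hℓ]
    simp [nsmul_eq_mul]
  have hℓpos : (0:ℝ) < ℓ := by exact_mod_cast hℓ1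
  rw [h12]
  have : ∫ s, (Xwin D n f j W₁ s) ^ 2 ∂μ
      = (1 / ℓ) * ∫ s, (∑ i ∈ W₁, (Xwin D n f i W₁ s) ^ 2) ∂μ := by
    rw [hsum]; field_simp
  rw [this]
  exact mul_le_mul_of_nonneg_left hkey (by positivity)
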